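/- For every u ∈ H¹(ℝ^N)\{0}, the functions v₁(u) and v₂(u) are linearly independent in H¹(ℝ^N), and for every v in the linear span of {v₁(u), v₂(u)} one has J(v) ≤ μ₂(u) · ∫_{ℝ^N} |u(x)|^{p−2} v² dx. -/

import Mathlib

open MeasureTheory Filter Topology Metric

noncomputable section

namespace ScalarField

/-- `p` is a subcritical exponent: `2 < p < 2*` where `2* = 2N/(N-2)` if `N ≥ 3`
and `2* = ∞` if `N = 2`. -/
def Subcritical (N : ℕ) (p : ℝ) : Prop :=
  2 < p ∧ (3 ≤ N → p < 2 * N / (N - 2))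

variable {N : ℕ}

/-- Membership in the Sobolev space `H¹(ℝ^N)`: `u` and its gradient are in `L²`. -/
def InH1 (u : EuclideanSpace ℝ (Fin N) → ℝ) : Prop :=
  MemLp u 2 volume ∧ Differentiable ℝ u ∧
    MemLp (fun x => ‖gradient u x‖) 2 volume

/-- The quadratic functional `J(u) = ∫ |∇u|² + V(x) u²`. -/
def Jf (V u : EuclideanSpace ℝ (Fin N) → ℝ) : ℝ :=
  ∫ x, (‖gradient u x‖ ^ 2 + V x * u x ^ 2)

/-- `I(u) = ∫ |u|^p`. -/
def If (p : ℝ) (u : EuclideanSpace ℝ (Fin N) → ℝ) : ℝ :=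
  ∫ x, |u x| ^ p

/-- The manifold `M = {u ∈ H¹ : I(u) = 1}`. -/
def Msphere (N : ℕ) (p : ℝ) : Set (EuclideanSpace ℝ (Fin N) → ℝ) :=
  {u | InH1 u ∧ If p u = 1}

/-- Square of the standard `H¹` norm. -/
def H1normSq (u : EuclideanSpace ℝ (Fin N) → ℝ) : ℝ :=
  ∫ x, (u x ^ 2 + ‖gradient u x‖ ^ 2)

/-- The standard `H¹` inner product. -/
def H1inner (u v : EuclideanSpace ℝ (Fin N) → ℝ) : ℝ :=
  ∫ x, (u x * v x + (inner ℝ (gradient u x) (gradient v x) : ℝ))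

/-- Strong (norm) convergence of a sequence in `H¹`. -/
def H1Tendsto (uk : ℕ → EuclideanSpace ℝ (Fin N) → ℝ)
    (u : EuclideanSpace ℝ (Fin N) → ℝ) : Prop :=
  Tendsto (fun k => H1normSq (uk k - u)) atTop (𝓝 0)

/-- Weak convergence of a sequence in `H¹`. -/
def H1WeakTendsto (vk : ℕ → EuclideanSpace ℝ (Fin N) → ℝ)
    (v : EuclideanSpace ℝ (Fin N) → ℝ) : Prop :=
  ∀ w, InH1 w → Tendsto (fun k => H1inner (vk k) w) atTop (𝓝 (H1inner v w))

/-- `u` is nonzero as an element of `H¹`, i.e. not a.e. zero. -/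
def AEnonzero (u : EuclideanSpace ℝ (Fin N) → ℝ) : Prop :=
  ¬ (u =ᵐ[volume] (0 : EuclideanSpace ℝ (Fin N) → ℝ))

/-- `K_u(v) = ∫ |u|^{p-2} v²`. -/
def Kf (p : ℝ) (u v : EuclideanSpace ℝ (Fin N) → ℝ) : ℝ :=
  ∫ x, |u x| ^ (p - 2) * v x ^ 2

/-- `M_u = {v ∈ H¹ : K_u(v) = 1}`. -/
def MuSet (p : ℝ) (u : EuclideanSpace ℝ (Fin N) → ℝ) :
    Set (EuclideanSpace ℝ (Fin N) → ℝ) :=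
  {v | InH1 v ∧ Kf p u v = 1}

/-- `μ₁(u) = inf {J(v) : v ∈ M_u}`. -/
def mu1 (V : EuclideanSpace ℝ (Fin N) → ℝ) (p : ℝ)
    (u : EuclideanSpace ℝ (Fin N) → ℝ) : ℝ :=
  sInf (Jf V '' MuSet p u)

/-- `v₁` is a minimizer of `J` over `M_u`. -/
def IsMin1 (V : EuclideanSpace ℝ (Fin N) → ℝ) (p : ℝ)
    (u v₁ : EuclideanSpace ℝ (Fin N) → ℝ) : Prop :=
  v₁ ∈ MuSet p u ∧ Jf V v₁ = mu1 V p u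

/-- `L_u(v) = ∫ |u|^{p-2} v₁(u) v`. -/
def Lf (p : ℝ) (u v₁ v : EuclideanSpace ℝ (Fin N) → ℝ) : ℝ :=
  ∫ x, |u x| ^ (p - 2) * v₁ x * v x

/-- `N_u = {v ∈ M_u : L_u(v) = 0}`. -/
def NuSet (p : ℝ) (u v₁ : EuclideanSpace ℝ (Fin N) → ℝ) :
    Set (EuclideanSpace ℝ (Fin N) → ℝ) :=
  {v | v ∈ MuSet p u ∧ Lf p u v₁ v = 0}

/-- `μ₂(u) = inf {J(v) : v ∈ N_u}`. -/
def mu2 (V : EuclideanSpace ℝ (Fin N) → ℝ) (p : ℝ)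
    (u v₁ : EuclideanSpace ℝ (Fin N) → ℝ) : ℝ :=
  sInf (Jf V '' NuSet p u v₁)

/-- `v₂` is a minimizer of `J` over `N_u`. -/
def IsMin2 (V : EuclideanSpace ℝ (Fin N) → ℝ) (p : ℝ)
    (u v₁ v₂ : EuclideanSpace ℝ (Fin N) → ℝ) : Prop :=
  v₂ ∈ NuSet p u v₁ ∧ Jf V v₂ = mu2 V p u v₁

/-- `v₁sel` is a choice of the unique a.e.-positive minimizer `v₁(u)` of `J` over `M_u`,
for every `u ∈ H¹ \ {0}`. -/
def IsV1Selection (V : EuclideanSpace ℝ (Fin N) → ℝ) (p : ℝ)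
    (v₁sel : (EuclideanSpace ℝ (Fin N) → ℝ) → EuclideanSpace ℝ (Fin N) → ℝ) : Prop :=
  ∀ u, InH1 u → AEnonzero u →
    IsMin1 V p u (v₁sel u) ∧ (∀ᵐ x ∂volume, 0 < v₁sel u x) ∧
    (∀ v, IsMin1 V p u v → v =ᵐ[volume] v₁sel u)

/-- `h(u) = ∫ |u|^{p-2} u v₁(u)`. -/
def hFun (p : ℝ)
    (v₁sel : (EuclideanSpace ℝ (Fin N) → ℝ) → EuclideanSpace ℝ (Fin N) → ℝ)
    (u : EuclideanSpace ℝ (Fin N) → ℝ) : ℝ :=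
  ∫ x, |u x| ^ (p - 2) * u x * v₁sel u x

/-- `u` is a weak solution of `-Δu + V(x) u = λ |u|^{p-2} u` on `ℝ^N`. -/
def IsWeakSol (V : EuclideanSpace ℝ (Fin N) → ℝ) (p lam : ℝ)
    (u : EuclideanSpace ℝ (Fin N) → ℝ) : Prop :=
  ∀ w, InH1 w →
    (∫ x, ((inner ℝ (gradient u x) (gradient w x) : ℝ) + V x * u x * w x))
      = lam * ∫ x, |u x| ^ (p - 2) * u x * w x

/-- `u` changes sign: both `u⁺` and `u⁻` are nonzero on sets of positive measure. -/
def SignChanging (u : EuclideanSpace ℝ (Fin N) → ℝ) : Prop :=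
  volume {x | 0 < u x} ≠ 0 ∧ volume {x | u x < 0} ≠ 0

/-- The unit circle `S¹ ⊆ ℂ`. -/
abbrev Sph : Type := Metric.sphere (0 : ℂ) 1

/-- The set of minimax values `max_{u ∈ γ(S¹)} J(u)` over odd continuous maps
`γ : S¹ → Mset`, continuity being with respect to the `H¹` norm. -/
def minimaxVals (V : EuclideanSpace ℝ (Fin N) → ℝ)
    (Mset : Set (EuclideanSpace ℝ (Fin N) → ℝ)) : Set ℝ :=
  {c | ∃ γ : Sph → EuclideanSpace ℝ (Fin N) → ℝ,
    (∀ z, γ (-z) = -(γ z)) ∧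
    (∀ z : Sph, Tendsto (fun w => H1normSq (γ w - γ z)) (𝓝 z) (𝓝 0)) ∧
    (∀ z, γ z ∈ Mset) ∧ c = sSup (Jf V '' Set.range γ)}

/-- The second minimax level `λ₂`. -/
def lam2 (N : ℕ) (V : EuclideanSpace ℝ (Fin N) → ℝ) (p : ℝ) : ℝ :=
  sInf (minimaxVals V (Msphere N p))

/-- The ground-state level `λ₁^∞` of the problem at infinity. -/
def lam1infty (N : ℕ) (p : ℝ) (Vinf : ℝ) : ℝ :=
  sInf (Jf (fun _ => Vinf) '' Msphere N p)

/-- `u` is a radial function. -/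
def IsRadial (u : EuclideanSpace ℝ (Fin N) → ℝ) : Prop :=
  ∀ x y : EuclideanSpace ℝ (Fin N), ‖x‖ = ‖y‖ → u x = u y

/-- `M_r = M ∩ H¹_r`. -/
def MsphereR (N : ℕ) (p : ℝ) : Set (EuclideanSpace ℝ (Fin N) → ℝ) :=
  {u | u ∈ Msphere N p ∧ IsRadial u}

/-- The second radial minimax level `λ_{2,r}`. -/
def lam2r (N : ℕ) (V : EuclideanSpace ℝ (Fin N) → ℝ) (p : ℝ) : ℝ :=
  sInf (minimaxVals V (MsphereR N p))

/-- The `L^p` norm. -/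
def LpNorm (p : ℝ) (u : EuclideanSpace ℝ (Fin N) → ℝ) : ℝ :=
  (∫ x, |u x| ^ p) ^ (1 / p)

/-- The decay property of nonnegative ground states: any nonnegative minimizer of `J`
over `M` decays at least like `C e^{-a₀ |x|}`. -/
def GroundStateDecay (N : ℕ) (V : EuclideanSpace ℝ (Fin N) → ℝ) (p a₀ : ℝ) : Prop :=
  ∃ C > (0 : ℝ), ∀ w₁ ∈ Msphere N p, (∀ x, 0 ≤ w₁ x) →
    Jf V w₁ = sInf (Jf V '' Msphere N p) →
    ∀ x, w₁ x ≤ C * Real.exp (-a₀ * ‖x‖)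



/- ====== auxiliary lemmas ====== -/

open scoped ENNReal NNReal

lemma grad_aesm (f : EuclideanSpace ℝ (Fin N) → ℝ) :
    AEStronglyMeasurable (gradient f) volume := by
  have h1 : Measurable (fderiv ℝ f) := measurable_fderiv ℝ f
  have h2 : Continuous (InnerProductSpace.toDual ℝ (EuclideanSpace ℝ (Fin N))).symm :=
    (InnerProductSpace.toDual ℝ (EuclideanSpace ℝ (Fin N))).symm.continuous
  exact ((h2.measurable).comp h1).aestronglyMeasurable

lemma memL2_grad {f : EuclideanSpace ℝ (Fin N) → ℝ} (hf : InH1 f) :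
    MemLp (gradient f) 2 volume :=
  (memLp_norm_iff (grad_aesm f)).1 hf.2.2

lemma mul_int_of_L2 {f g : EuclideanSpace ℝ (Fin N) → ℝ}
    (hf : MemLp f 2 volume) (hg : MemLp g 2 volume) :
    Integrable (fun x => f x * g x) volume := by
  refine Integrable.mono' ((hf.integrable_sq.add hg.integrable_sq).const_mul (1/2 : ℝ))
    (hf.aestronglyMeasurable.mul hg.aestronglyMeasurable) (ae_of_all _ fun x => ?_)
  simp only [Pi.add_apply]
  rw [Real.norm_eq_abs, abs_mul]
  nlinarith [sq_nonneg (|f x| - |g x|), sq_abs (f x), sq_abs (g x), abs_nonneg (f x),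
    abs_nonneg (g x)]

lemma inner_grad_int {f g : EuclideanSpace ℝ (Fin N) → ℝ} (hf : InH1 f) (hg : InH1 g) :
    Integrable (fun x => (inner ℝ (gradient f x) (gradient g x) : ℝ)) volume := by
  refine Integrable.mono' ((hf.2.2.integrable_sq.add hg.2.2.integrable_sq).const_mul (1/2 : ℝ))
    ((memL2_grad hf).aestronglyMeasurable.inner (memL2_grad hg).aestronglyMeasurable)
    (ae_of_all _ fun x => ?_)
  have h1 := abs_real_inner_le_norm (gradient f x) (gradient g x)
  simp only [Pi.add_apply]
  rw [Real.norm_eq_abs]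
  nlinarith [sq_nonneg (‖gradient f x‖ - ‖gradient g x‖), norm_nonneg (gradient f x),
    norm_nonneg (gradient g x)]

lemma bdd_mul_int {V f : EuclideanSpace ℝ (Fin N) → ℝ} (hV : MemLp V ⊤ volume)
    (hf : Integrable f volume) : Integrable (fun x => V x * f x) volume := by
  set C : ℝ := (eLpNormEssSup V volume).toReal with hC
  have hbd : ∀ᵐ x ∂volume, ‖V x‖ ≤ C := by
    filter_upwards [ae_le_eLpNormEssSup (f := V) (μ := volume)] with x hx
    have hlt : eLpNormEssSup V volume < ⊤ := by
      have := hV.2; rwa [eLpNorm_exponent_top] at this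
    calc ‖V x‖ = ((‖V x‖₊ : ℝ≥0∞)).toReal := by simp
    _ ≤ C := ENNReal.toReal_mono hlt.ne hx
  refine Integrable.mono' (hf.norm.const_mul C)
    (hV.aestronglyMeasurable.mul hf.aestronglyMeasurable) ?_
  filter_upwards [hbd] with x hx
  rw [Real.norm_eq_abs, abs_mul]
  exact mul_le_mul_of_nonneg_right (by simpa [Real.norm_eq_abs] using hx) (abs_nonneg _)

lemma gradient_combo {v w : EuclideanSpace ℝ (Fin N) → ℝ}
    (hv : Differentiable ℝ v) (hw : Differentiable ℝ w) (a b : ℝ)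
    (x : EuclideanSpace ℝ (Fin N)) :
    gradient (fun y => a * v y + b * w y) x = a • gradient v x + b • gradient w x := by
  have h3 : HasFDerivAt (fun y => a * v y + b * w y)
      (a • fderiv ℝ v x + b • fderiv ℝ w x) x :=
    (((hv x).hasFDerivAt.const_mul a).add ((hw x).hasFDerivAt.const_mul b))
  have h4 := h3.hasGradientAt.gradient
  rw [h4, map_add, _root_.map_smul, _root_.map_smul]
  rfl

lemma InH1.combo {v w : EuclideanSpace ℝ (Fin N) → ℝ} (hv : InH1 v) (hw : InH1 w)
    (a b : ℝ) : InH1 (fun x => a * v x + b * w x) := by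
  refine ⟨(hv.1.const_mul a).add (hw.1.const_mul b),
    ((hv.2.1.const_mul a).add (hw.2.1.const_mul b)), ?_⟩
  have h1 : MemLp (fun x => a • gradient v x + b • gradient w x) 2 volume :=
    ((memL2_grad hv).const_smul a).add ((memL2_grad hw).const_smul b)
  have h3 : (fun x => ‖gradient (fun y => a * v y + b * w y) x‖)
      = fun x => ‖a • gradient v x + b • gradient w x‖ :=
    funext fun x => by rw [gradient_combo hv.2.1 hw.2.1 a b x]
  show MemLp (fun x => ‖gradient (fun y => a * v y + b * w y) x‖) 2 volume
  rw [h3]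
  exact h1.norm

lemma Jf_nonneg {V : EuclideanSpace ℝ (Fin N) → ℝ} (hV0 : ∀ x, 0 ≤ V x)
    (f : EuclideanSpace ℝ (Fin N) → ℝ) : 0 ≤ Jf V f :=
  integral_nonneg fun x => add_nonneg (by positivity) (mul_nonneg (hV0 x) (sq_nonneg _))

/-- if `Kf p u v ≠ 0` then the integrand is integrable -/
lemma Kf_int {p : ℝ} {u v : EuclideanSpace ℝ (Fin N) → ℝ} (h : Kf p u v ≠ 0) :
    Integrable (fun x => |u x| ^ (p - 2) * v x ^ 2) volume := by
  by_contra hc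
  exact h (integral_undef hc)

lemma weight_aesm {u : EuclideanSpace ℝ (Fin N) → ℝ} (hu : MemLp u 2 volume)
    {p : ℝ} (hp : 2 < p) :
    AEStronglyMeasurable (fun x => |u x| ^ (p - 2)) volume := by
  have h : Continuous (fun y : ℝ => y ^ (p - 2)) :=
    Real.continuous_rpow_const (by linarith)
  have := h.comp_aestronglyMeasurable hu.aestronglyMeasurable.norm
  simpa [Real.norm_eq_abs] using this

/-- cross term integrability for the weighted quadratic form -/
lemma cross_int {p : ℝ} (hp : 2 < p) {u v w : EuclideanSpace ℝ (Fin N) → ℝ}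
    (hu : MemLp u 2 volume) (hv : MemLp v 2 volume) (hw : MemLp w 2 volume)
    (Iv : Integrable (fun x => |u x| ^ (p - 2) * v x ^ 2) volume)
    (Iw : Integrable (fun x => |u x| ^ (p - 2) * w x ^ 2) volume) :
    Integrable (fun x => |u x| ^ (p - 2) * v x * w x) volume := by
  refine Integrable.mono' ((Iv.add Iw).const_mul (1/2 : ℝ))
    (((weight_aesm hu hp).mul hv.aestronglyMeasurable).mul hw.aestronglyMeasurable)
    (ae_of_all _ fun x => ?_)
  simp only [Pi.add_apply]
  have hW : 0 ≤ |u x| ^ (p - 2) := Real.rpow_nonneg (abs_nonneg _) _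
  rw [Real.norm_eq_abs, abs_mul, abs_mul, abs_of_nonneg hW]
  nlinarith [mul_nonneg hW (sq_nonneg (|v x| - |w x|)), sq_abs (v x), sq_abs (w x),
    abs_nonneg (v x), abs_nonneg (w x)]

/-- expansion of `Kf` on a linear combination -/
lemma Kf_combo {p : ℝ} (hp : 2 < p) {u v w : EuclideanSpace ℝ (Fin N) → ℝ}
    (hu : MemLp u 2 volume) (hv : MemLp v 2 volume) (hw : MemLp w 2 volume)
    (Iv : Integrable (fun x => |u x| ^ (p - 2) * v x ^ 2) volume)
    (Iw : Integrable (fun x => |u x| ^ (p - 2) * w x ^ 2) volume) (a b : ℝ) :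
    Kf p u (fun x => a * v x + b * w x)
      = a ^ 2 * Kf p u v + 2 * a * b * (∫ x, |u x| ^ (p - 2) * v x * w x)
        + b ^ 2 * Kf p u w := by
  have Ic := cross_int hp hu hv hw Iv Iw
  have key : (fun x => |u x| ^ (p - 2) * (a * v x + b * w x) ^ 2)
      = fun x => a ^ 2 * (|u x| ^ (p - 2) * v x ^ 2)
        + ((2 * a * b) * (|u x| ^ (p - 2) * v x * w x)
          + b ^ 2 * (|u x| ^ (p - 2) * w x ^ 2)) := by
    funext x; ring
  have I2 : Integrable (fun x => (2 * a * b) * (|u x| ^ (p - 2) * v x * w x)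
      + b ^ 2 * (|u x| ^ (p - 2) * w x ^ 2)) volume :=
    (Ic.const_mul _).add (Iw.const_mul _)
  rw [Kf, key, integral_add (Iv.const_mul _) I2,
    integral_add (Ic.const_mul _) (Iw.const_mul _), integral_const_mul,
    integral_const_mul, integral_const_mul]
  rw [Kf, Kf]; ring

/-- the bilinear form associated to `Jf` -/
def Bform (V v w : EuclideanSpace ℝ (Fin N) → ℝ) : ℝ :=
  ∫ x, ((inner ℝ (gradient v x) (gradient w x) : ℝ) + V x * v x * w x)

lemma Vmul_int {V v w : EuclideanSpace ℝ (Fin N) → ℝ} (hVbdd : MemLp V ⊤ volume)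
    (hv : MemLp v 2 volume) (hw : MemLp w 2 volume) :
    Integrable (fun x => V x * v x * w x) volume := by
  have := bdd_mul_int hVbdd (mul_int_of_L2 hv hw)
  simpa [mul_assoc] using this

lemma Jf_combo {V : EuclideanSpace ℝ (Fin N) → ℝ} (hVbdd : MemLp V ⊤ volume)
    {v w : EuclideanSpace ℝ (Fin N) → ℝ} (hv : InH1 v) (hw : InH1 w) (a b : ℝ) :
    Jf V (fun x => a * v x + b * w x)
      = a ^ 2 * Jf V v + 2 * a * b * Bform V v w + b ^ 2 * Jf V w := by
  have Igv : Integrable (fun x => ‖gradient v x‖ ^ 2) volume := hv.2.2.integrable_sq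
  have Igw : Integrable (fun x => ‖gradient w x‖ ^ 2) volume := hw.2.2.integrable_sq
  have IVv : Integrable (fun x => V x * v x ^ 2) volume := by
    have := Vmul_int hVbdd hv.1 hv.1; simpa [sq, mul_assoc] using this
  have IVw : Integrable (fun x => V x * w x ^ 2) volume := by
    have := Vmul_int hVbdd hw.1 hw.1; simpa [sq, mul_assoc] using this
  have Iv : Integrable (fun x => ‖gradient v x‖ ^ 2 + V x * v x ^ 2) volume := Igv.add IVv
  have Iw : Integrable (fun x => ‖gradient w x‖ ^ 2 + V x * w x ^ 2) volume := Igw.add IVw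
  have Ic : Integrable
      (fun x => (inner ℝ (gradient v x) (gradient w x) : ℝ) + V x * v x * w x) volume :=
    (inner_grad_int hv hw).add (Vmul_int hVbdd hv.1 hw.1)
  have key : (fun x => ‖gradient (fun y => a * v y + b * w y) x‖ ^ 2
        + V x * (a * v x + b * w x) ^ 2)
      = fun x => a ^ 2 * (‖gradient v x‖ ^ 2 + V x * v x ^ 2)
        + ((2 * a * b) * ((inner ℝ (gradient v x) (gradient w x) : ℝ) + V x * v x * w x)
          + b ^ 2 * (‖gradient w x‖ ^ 2 + V x * w x ^ 2)) := by
    funext x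
    rw [gradient_combo hv.2.1 hw.2.1 a b x, norm_add_sq_real]
    simp only [norm_smul, Real.norm_eq_abs, real_inner_smul_left, real_inner_smul_right,
      mul_pow, sq_abs]
    ring
  have I2 : Integrable (fun x => (2 * a * b) * ((inner ℝ (gradient v x) (gradient w x) : ℝ)
      + V x * v x * w x) + b ^ 2 * (‖gradient w x‖ ^ 2 + V x * w x ^ 2)) volume :=
    (Ic.const_mul _).add (Iw.const_mul _)
  rw [Jf, key, integral_add (Iv.const_mul _) I2,
    integral_add (Ic.const_mul _) (Iw.const_mul _), integral_const_mul,
    integral_const_mul, integral_const_mul]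
  rw [Jf, Jf, Bform]; ring

lemma mu1_le {V : EuclideanSpace ℝ (Fin N) → ℝ} (hV0 : ∀ x, 0 ≤ V x) {p : ℝ}
    {u v : EuclideanSpace ℝ (Fin N) → ℝ} (hv : v ∈ MuSet p u) :
    mu1 V p u ≤ Jf V v := by
  apply csInf_le
  · exact ⟨0, fun y hy => by
      obtain ⟨z, _, rfl⟩ := hy
      exact Jf_nonneg hV0 z⟩
  · exact Set.mem_image_of_mem _ hv

/- ====== end auxiliary lemmas ====== -/

/- STATEMENT 6 -/
theorem v1_v2_independent_and_span_estimate (N : ℕ) (hN : 2 ≤ N)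
    (p : ℝ) (hp : Subcritical N p)
    (V : EuclideanSpace ℝ (Fin N) → ℝ) (Vinf : ℝ)
    (hVbdd : MemLp V ⊤ volume) (hV0 : ∀ x, 0 ≤ V x)
    (hVlim : Tendsto V (cocompact (EuclideanSpace ℝ (Fin N))) (𝓝 Vinf))
    (hVinf : 0 < Vinf)
    (u v₁ v₂ : EuclideanSpace ℝ (Fin N) → ℝ)
    (hu : InH1 u) (hu0 : AEnonzero u)
    (hv₁ : IsMin1 V p u v₁) (hv₁pos : ∀ᵐ x ∂volume, 0 < v₁ x)
    (hv₂ : IsMin2 V p u v₁ v₂) :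
    (∀ c₁ c₂ : ℝ,
      (fun x => c₁ * v₁ x + c₂ * v₂ x) =ᵐ[volume]
        (0 : EuclideanSpace ℝ (Fin N) → ℝ) → c₁ = 0 ∧ c₂ = 0) ∧
    (∀ c₁ c₂ : ℝ,
      Jf V (fun x => c₁ * v₁ x + c₂ * v₂ x)
        ≤ mu2 V p u v₁ * Kf p u (fun x => c₁ * v₁ x + c₂ * v₂ x)) := by
  obtain ⟨hp2, -⟩ := hp
  obtain ⟨⟨hv₁H1, hv₁K⟩, hv₁J⟩ := hv₁
  obtain ⟨⟨⟨hv₂H1, hv₂K⟩, hv₂L⟩, hv₂J⟩ := hv₂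
  have Iv1 : Integrable (fun x => |u x| ^ (p - 2) * v₁ x ^ 2) volume :=
    Kf_int (by rw [hv₁K]; norm_num)
  have Iv2 : Integrable (fun x => |u x| ^ (p - 2) * v₂ x ^ 2) volume :=
    Kf_int (by rw [hv₂K]; norm_num)
  have hLf : (∫ x, |u x| ^ (p - 2) * v₁ x * v₂ x) = 0 := hv₂L
  have hKexp : ∀ a b : ℝ, Kf p u (fun x => a * v₁ x + b * v₂ x) = a ^ 2 + b ^ 2 := by
    intro a b
    rw [Kf_combo hp2 hu.1 hv₁H1.1 hv₂H1.1 Iv1 Iv2, hv₁K, hv₂K, hLf]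
    ring
  have hmu12 : mu1 V p u ≤ mu2 V p u v₁ := by
    rw [← hv₂J]; exact mu1_le hV0 ⟨hv₂H1, hv₂K⟩
  set d : ℝ := mu2 V p u v₁ - mu1 V p u with hd
  have hdn : 0 ≤ d := by simp only [hd]; linarith
  have key : ∀ t : ℝ, 0 ≤ 2 * t * Bform V v₁ v₂ + t ^ 2 * d := by
    intro t
    have hpos : (0:ℝ) < 1 + t ^ 2 := by positivity
    set c := Real.sqrt ((1 + t ^ 2)⁻¹) with hc
    have hc2 : c ^ 2 = (1 + t ^ 2)⁻¹ := Real.sq_sqrt (by positivity)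
    have hKt : Kf p u (fun x => c * v₁ x + (c * t) * v₂ x) = 1 := by
      rw [hKexp]
      have h2 : c ^ 2 + (c * t) ^ 2 = c ^ 2 * (1 + t ^ 2) := by ring
      rw [h2, hc2]
      field_simp
    have hmem : (fun x => c * v₁ x + (c * t) * v₂ x) ∈ MuSet p u :=
      ⟨hv₁H1.combo hv₂H1 c (c * t), hKt⟩
    have h1 := mu1_le hV0 hmem
    rw [Jf_combo hVbdd hv₁H1 hv₂H1 c (c * t), hv₁J, hv₂J] at h1
    have hrw : c ^ 2 * mu1 V p u + 2 * c * (c * t) * Bform V v₁ v₂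
          + (c * t) ^ 2 * mu2 V p u v₁
        = (1 + t ^ 2)⁻¹ * (mu1 V p u + 2 * t * Bform V v₁ v₂
            + t ^ 2 * mu2 V p u v₁) := by
      have h2 : c ^ 2 * mu1 V p u + 2 * c * (c * t) * Bform V v₁ v₂
            + (c * t) ^ 2 * mu2 V p u v₁
          = c ^ 2 * (mu1 V p u + 2 * t * Bform V v₁ v₂ + t ^ 2 * mu2 V p u v₁) := by
        ring
      rw [h2, hc2]
    rw [hrw] at h1
    rw [inv_mul_eq_div, le_div_iff₀ hpos] at h1
    simp only [hd]
    nlinarith [h1]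
  have hB0 : Bform V v₁ v₂ = 0 := by
    have hd1 : (0:ℝ) < d + 1 := by linarith
    set e : ℝ := (d + 1)⁻¹ with he'
    have epos : 0 < e := inv_pos.2 hd1
    have he : e * (d + 1) = 1 := inv_mul_cancel₀ hd1.ne'
    have hed : e * d = 1 - e := by linear_combination he
    have h := key (-(2 * Bform V v₁ v₂ * e))
    have h4 : 2 * -(2 * Bform V v₁ v₂ * e) * Bform V v₁ v₂
          + (-(2 * Bform V v₁ v₂ * e)) ^ 2 * d
        = -(4 * (Bform V v₁ v₂ * e) ^ 2) := by
      linear_combination (4 * Bform V v₁ v₂ ^ 2 * e) * hed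
    have h5 : (Bform V v₁ v₂ * e) ^ 2 ≤ 0 := by rw [h4] at h; linarith
    have h7 : (Bform V v₁ v₂ * e) ^ 2 = 0 := le_antisymm h5 (sq_nonneg _)
    have h6 : Bform V v₁ v₂ * e = 0 := by
      exact sq_eq_zero_iff.mp h7
    rcases mul_eq_zero.mp h6 with hB | hE
    · exact hB
    · exact absurd hE epos.ne'
  have hJexp : ∀ a b : ℝ, Jf V (fun x => a * v₁ x + b * v₂ x)
      = a ^ 2 * mu1 V p u + b ^ 2 * mu2 V p u v₁ := by
    intro a b
    rw [Jf_combo hVbdd hv₁H1 hv₂H1 a b, hv₁J, hv₂J, hB0]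
    ring
  constructor
  · intro a b hae
    have h0 : Kf p u (fun x => a * v₁ x + b * v₂ x) = 0 := by
      rw [Kf]
      have hz : (fun x => |u x| ^ (p - 2) * (a * v₁ x + b * v₂ x) ^ 2)
          =ᵐ[volume] (fun _ => (0:ℝ)) := by
        filter_upwards [hae] with x hx
        simp only [Pi.zero_apply] at hx
        rw [hx]
        ring
      rw [integral_congr_ae hz, integral_zero]
    rw [hKexp a b] at h0
    constructor <;> nlinarith [sq_nonneg a, sq_nonneg b]
  · intro a b
    rw [hJexp a b, hKexp a b]
    nlinarith [mul_le_mul_of_nonneg_left hmu12 (sq_nonneg a)]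


end ScalarField
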